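/- Let V = ℝ⁴ with basis p₁,q₁,p₂,q₂ and the symplectic form Ω determined by Ω(p₁,q₁) = Ω(p₂,q₂) = −1 and Ω = 0 on all other pairs of distinct basis vectors. Let 𝔥 ⊂ 𝔰𝔭(V,Ω) be the real span of the five elements p₂²+q₂², p₁q₁, p₁p₂, p₁q₂, p₁² (under the identification uv ↦ (w ↦ Ω(u,w)v + Ω(v,w)u)), and let 𝔭 = {L ∈ 𝔰𝔭(V,Ω) : L·p₁ ∈ ℝ·p₁} be the subalgebra stabilizing the line ℝp₁. For D ∈ SL(span(p₂,q₂)) let g̃ ∈ GL(V) be the symplectic map with g̃p₁ = q₁, g̃q₁ = −p₁ and g̃ = D on span(p₂,q₂). Then for every such D one has 𝔭 ∩ g̃𝔥g̃⁻¹ = span{ p₁q₁ , (Dp₂)² + (Dq₂)² }; in particular this intersection is 2-dimensional. -/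
import Mathlib


open Matrix

/-- The Gram matrix of the symplectic form `Ω` on `ℝ⁴` in the basis `p₁,q₁,p₂,q₂`:
`Ω(p₁,q₁) = Ω(p₂,q₂) = −1` and `Ω = 0` on the other pairs of distinct basis vectors. -/
def OmMat : Matrix (Fin 4) (Fin 4) ℝ :=
  !![0, -1, 0, 0;
     1, 0, 0, 0;
     0, 0, 0, -1;
     0, 0, 1, 0]

/-- The symplectic form `Ω(x,y)`. -/
def Om (x y : Fin 4 → ℝ) : ℝ := x ⬝ᵥ OmMat.mulVec y

/-- The basis vectors `p₁, q₁, p₂, q₂` of `V = ℝ⁴`. -/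
noncomputable def p1 : Fin 4 → ℝ := Pi.single 0 1
noncomputable def q1 : Fin 4 → ℝ := Pi.single 1 1
noncomputable def p2 : Fin 4 → ℝ := Pi.single 2 1
noncomputable def q2 : Fin 4 → ℝ := Pi.single 3 1

/-- The matrix of the endomorphism `uv : w ↦ Ω(u,w)v + Ω(v,w)u` of `ℝ⁴`
(the standard identification `𝔰𝔭₄(ℝ) ≅ S²(ℝ⁴)`). -/
noncomputable def sprod (u v : Fin 4 → ℝ) : Matrix (Fin 4) (Fin 4) ℝ :=
  Matrix.of fun i j => Om u (Pi.single j 1) * v i + Om v (Pi.single j 1) * u i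

/-- The subalgebra `𝔥 = span(p₂²+q₂², p₁q₁, p₁p₂, p₁q₂, p₁²) ⊂ 𝔰𝔭(V,Ω)`. -/
noncomputable def hAlg : Submodule ℝ (Matrix (Fin 4) (Fin 4) ℝ) :=
  Submodule.span ℝ {sprod p2 p2 + sprod q2 q2, sprod p1 q1, sprod p1 p2,
    sprod p1 q2, sprod p1 p1}

/-- The symplectic map `g̃` with `g̃p₁ = q₁`, `g̃q₁ = −p₁`, `g̃ = D` on `span(p₂,q₂)`. -/
def gTilde (D : Matrix (Fin 2) (Fin 2) ℝ) : Matrix (Fin 4) (Fin 4) ℝ :=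
  !![0, -1, 0, 0;
     1, 0, 0, 0;
     0, 0, D 0 0, D 0 1;
     0, 0, D 1 0, D 1 1]

/-! ### Auxiliary explicit computations -/

/-- Explicit right inverse of `gTilde D` when `det D = 1`. -/
def Ginv (D : Matrix (Fin 2) (Fin 2) ℝ) : Matrix (Fin 4) (Fin 4) ℝ :=
  !![0, 1, 0, 0; -1, 0, 0, 0; 0, 0, D 1 1, -(D 0 1); 0, 0, -(D 1 0), D 0 0]

/-- The explicit matrix of `(Dp₂)² + (Dq₂)²`. -/
noncomputable def Ym (D : Matrix (Fin 2) (Fin 2) ℝ) : Matrix (Fin 4) (Fin 4) ℝ :=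
  !![0,0,0,0;0,0,0,0;
     0,0,2*(D 0 0*D 1 0 + D 0 1*D 1 1), -2*(D 0 0^2 + D 0 1^2);
     0,0,2*(D 1 0^2 + D 1 1^2), -2*(D 0 0*D 1 0 + D 0 1*D 1 1)]

lemma aux_sprod_p1_q1 : sprod p1 q1 = !![1,0,0,0;0,-1,0,0;0,0,0,0;0,0,0,0] := by
  ext i j
  fin_cases i <;> fin_cases j <;>
    simp [sprod, Om, OmMat, p1, q1, Matrix.mulVec, dotProduct, Fin.sum_univ_four,
      Pi.single_apply, Matrix.vecHead, Matrix.vecTail]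

lemma aux_X : sprod p2 p2 + sprod q2 q2 = !![0,0,0,0;0,0,0,0;0,0,0,-2;0,0,2,0] := by
  ext i j
  fin_cases i <;> fin_cases j <;>
    simp [sprod, Om, OmMat, p2, q2, Matrix.mulVec, dotProduct, Fin.sum_univ_four,
      Pi.single_apply, Matrix.vecHead, Matrix.vecTail] <;> norm_num

lemma aux_g3 : sprod p1 p2 = !![0,0,0,-1;0,0,0,0;0,-1,0,0;0,0,0,0] := by
  ext i j
  fin_cases i <;> fin_cases j <;>
    simp [sprod, Om, OmMat, p1, p2, Matrix.mulVec, dotProduct, Fin.sum_univ_four,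
      Pi.single_apply, Matrix.vecHead, Matrix.vecTail]

lemma aux_g4 : sprod p1 q2 = !![0,0,1,0;0,0,0,0;0,0,0,0;0,-1,0,0] := by
  ext i j
  fin_cases i <;> fin_cases j <;>
    simp [sprod, Om, OmMat, p1, q2, Matrix.mulVec, dotProduct, Fin.sum_univ_four,
      Pi.single_apply, Matrix.vecHead, Matrix.vecTail]

lemma aux_g5 : sprod p1 p1 = !![0,-2,0,0;0,0,0,0;0,0,0,0;0,0,0,0] := by
  ext i j
  fin_cases i <;> fin_cases j <;>
    simp [sprod, Om, OmMat, p1, Matrix.mulVec, dotProduct, Fin.sum_univ_four,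
      Pi.single_apply, Matrix.vecHead, Matrix.vecTail] <;> norm_num

lemma aux_Gp2 (D : Matrix (Fin 2) (Fin 2) ℝ) :
    (gTilde D).mulVec p2 = ![0,0,D 0 0, D 1 0] := by
  ext i
  fin_cases i <;>
    simp [gTilde, p2, Matrix.mulVec, dotProduct, Fin.sum_univ_four,
      Pi.single_apply, Matrix.vecHead, Matrix.vecTail]

lemma aux_Gq2 (D : Matrix (Fin 2) (Fin 2) ℝ) :
    (gTilde D).mulVec q2 = ![0,0,D 0 1, D 1 1] := by
  ext i
  fin_cases i <;>
    simp [gTilde, q2, Matrix.mulVec, dotProduct, Fin.sum_univ_four,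
      Pi.single_apply, Matrix.vecHead, Matrix.vecTail]

set_option maxHeartbeats 1000000 in
lemma aux_Ybig (D : Matrix (Fin 2) (Fin 2) ℝ) :
    sprod ((gTilde D).mulVec p2) ((gTilde D).mulVec p2) +
      sprod ((gTilde D).mulVec q2) ((gTilde D).mulVec q2) = Ym D := by
  rw [aux_Gp2, aux_Gq2]
  ext i j
  fin_cases i <;> fin_cases j <;>
    simp [sprod, Om, OmMat, Ym, Matrix.mulVec, dotProduct, Fin.sum_univ_four,
      Pi.single_apply, Matrix.vecHead, Matrix.vecTail] <;> ring

lemma aux_GGinv (D : Matrix (Fin 2) (Fin 2) ℝ) (hD : D 0 0 * D 1 1 - D 0 1 * D 1 0 = 1) :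
    gTilde D * Ginv D = 1 := by
  ext i j
  fin_cases i <;> fin_cases j <;>
    simp [gTilde, Ginv, Matrix.mul_apply, Fin.sum_univ_four, Matrix.one_apply,
      Matrix.vecHead, Matrix.vecTail] <;> linarith [hD]

lemma aux_Ginv (D : Matrix (Fin 2) (Fin 2) ℝ) (hD : D 0 0 * D 1 1 - D 0 1 * D 1 0 = 1) :
    (gTilde D)⁻¹ = Ginv D := Matrix.inv_eq_right_inv (aux_GGinv D hD)

set_option maxHeartbeats 2000000 in
lemma aux_hsum (s1 s2 s3 s4 s5 : ℝ) :
    (s1 • !![0,0,0,0;0,0,0,0;0,0,0,-2;0,0,2,0] +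
       (s2 • !![1,0,0,0;0,-1,0,0;0,0,0,0;0,0,0,0] +
        (s3 • !![0,0,0,-1;0,0,0,0;0,-1,0,0;0,0,0,0] +
         (s4 • !![0,0,1,0;0,0,0,0;0,0,0,0;0,-1,0,0] +
          s5 • !![0,-2,0,0;0,0,0,0;0,0,0,0;0,0,0,0]))) :
        Matrix (Fin 4) (Fin 4) ℝ) =
    !![s2, -2*s5, s4, -s3; 0, -s2, 0, 0; 0, -s3, 0, -2*s1; 0, -s4, 2*s1, 0] := by
  ext i j
  fin_cases i <;> fin_cases j <;>
    simp [Matrix.add_apply, Matrix.smul_apply, Matrix.vecHead, Matrix.vecTail,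
      smul_eq_mul] <;> ring

set_option maxHeartbeats 1000000 in
lemma aux_conj (D : Matrix (Fin 2) (Fin 2) ℝ)
    (s1 s2 s3 s4 s5 : ℝ) :
    gTilde D *
      !![s2, -2*s5, s4, -s3; 0, -s2, 0, 0; 0, -s3, 0, -2*s1; 0, -s4, 2*s1, 0] * Ginv D =
    !![-s2, 0, 0, 0;
       2*s5, s2, s3*D 1 0 + s4*D 1 1, -(s3*D 0 0 + s4*D 0 1);
       s3*D 0 0 + s4*D 0 1, 0, s1*(2*(D 0 0*D 1 0 + D 0 1*D 1 1)), s1*(-2*(D 0 0^2 + D 0 1^2));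
       s3*D 1 0 + s4*D 1 1, 0, s1*(2*(D 1 0^2 + D 1 1^2)),
         s1*(-2*(D 0 0*D 1 0 + D 0 1*D 1 1))] := by
  ext i j
  fin_cases i <;> fin_cases j <;>
    simp [gTilde, Ginv, Matrix.mul_apply, Fin.sum_univ_four,
      Matrix.vecHead, Matrix.vecTail] <;> ring

set_option maxHeartbeats 2000000 in
lemma aux_comb (D : Matrix (Fin 2) (Fin 2) ℝ) (α β : ℝ) :
    α • (!![1,0,0,0;0,-1,0,0;0,0,0,0;0,0,0,0] : Matrix (Fin 4) (Fin 4) ℝ) + β • Ym D =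
    !![α, 0, 0, 0;
       0, -α, 0, 0;
       0, 0, β*(2*(D 0 0*D 1 0 + D 0 1*D 1 1)), β*(-2*(D 0 0^2 + D 0 1^2));
       0, 0, β*(2*(D 1 0^2 + D 1 1^2)), β*(-2*(D 0 0*D 1 0 + D 0 1*D 1 1))] := by
  ext i j
  fin_cases i <;> fin_cases j <;>
    simp [Ym, Matrix.add_apply, Matrix.smul_apply, Matrix.vecHead, Matrix.vecTail,
      smul_eq_mul] <;> ring

set_option maxHeartbeats 2000000 in
/-- For every `D ∈ SL(span(p₂,q₂))`, the intersection of the parabolic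
`𝔭 = {L ∈ 𝔰𝔭(V,Ω) : L·p₁ ∈ ℝ·p₁}` with `g̃𝔥g̃⁻¹` equals
`span(p₁q₁, (Dp₂)² + (Dq₂)²)`; in particular it is 2-dimensional. -/
theorem parabolic_inter_conjugated_stabilizer (D : Matrix (Fin 2) (Fin 2) ℝ)
    (hD : D.det = 1) :
    {L : Matrix (Fin 4) (Fin 4) ℝ |
        (Lᵀ * OmMat + OmMat * L = 0 ∧ L.mulVec p1 ∈ Submodule.span ℝ {p1}) ∧
        ∃ h ∈ hAlg, L = gTilde D * h * (gTilde D)⁻¹}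
      = ↑(Submodule.span ℝ
          {sprod p1 q1,
           sprod ((gTilde D).mulVec p2) ((gTilde D).mulVec p2) +
             sprod ((gTilde D).mulVec q2) ((gTilde D).mulVec q2)}) ∧
    Module.finrank ℝ
        (Submodule.span ℝ
          ({sprod p1 q1,
            sprod ((gTilde D).mulVec p2) ((gTilde D).mulVec p2) +
              sprod ((gTilde D).mulVec q2) ((gTilde D).mulVec q2)} :
            Set (Matrix (Fin 4) (Fin 4) ℝ))) = 2 := by
  rw [Matrix.det_fin_two] at hD
  have hD' : D 0 0 * D 1 1 - D 0 1 * D 1 0 = 1 := hD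
  rw [aux_Ybig, aux_sprod_p1_q1]
  constructor
  · ext L
    constructor
    · rintro ⟨⟨-, hline⟩, h, hh, rfl⟩
      rw [hAlg, aux_X, aux_sprod_p1_q1, aux_g3, aux_g4, aux_g5] at hh
      rw [Submodule.mem_span_insert] at hh
      obtain ⟨s1, z1, hz1, rfl⟩ := hh
      rw [Submodule.mem_span_insert] at hz1
      obtain ⟨s2, z2, hz2, rfl⟩ := hz1
      rw [Submodule.mem_span_insert] at hz2
      obtain ⟨s3, z3, hz3, rfl⟩ := hz2
      rw [Submodule.mem_span_insert] at hz3
      obtain ⟨s4, z4, hz4, rfl⟩ := hz3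
      rw [Submodule.mem_span_singleton] at hz4
      obtain ⟨s5, rfl⟩ := hz4
      rw [aux_hsum, aux_Ginv D hD', aux_conj] at hline ⊢
      rw [Submodule.mem_span_singleton] at hline
      obtain ⟨r, hr⟩ := hline
      have e1 : 2 * s5 = 0 := by
        have := congrFun hr 1
        simpa [p1, Matrix.mulVec, dotProduct, Fin.sum_univ_four, Pi.single_apply,
          Matrix.vecHead, Matrix.vecTail] using this.symm
      have e2 : s3 * D 0 0 + s4 * D 0 1 = 0 := by
        have := congrFun hr 2
        simpa [p1, Matrix.mulVec, dotProduct, Fin.sum_univ_four, Pi.single_apply,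
          Matrix.vecHead, Matrix.vecTail] using this.symm
      have e3 : s3 * D 1 0 + s4 * D 1 1 = 0 := by
        have := congrFun hr 3
        simpa [p1, Matrix.mulVec, dotProduct, Fin.sum_univ_four, Pi.single_apply,
          Matrix.vecHead, Matrix.vecTail] using this.symm
      have hs5 : s5 = 0 := by linarith
      have hs3 : s3 = 0 := by linear_combination D 1 1 * e2 - D 0 1 * e3 - s3 * hD'
      have hs4 : s4 = 0 := by linear_combination D 0 0 * e3 - D 1 0 * e2 - s4 * hD'
      have key : (!![-s2, 0, 0, 0;
          2*s5, s2, s3*D 1 0 + s4*D 1 1, -(s3*D 0 0 + s4*D 0 1);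
          s3*D 0 0 + s4*D 0 1, 0, s1*(2*(D 0 0*D 1 0 + D 0 1*D 1 1)),
            s1*(-2*(D 0 0^2 + D 0 1^2));
          s3*D 1 0 + s4*D 1 1, 0, s1*(2*(D 1 0^2 + D 1 1^2)),
            s1*(-2*(D 0 0*D 1 0 + D 0 1*D 1 1))] : Matrix (Fin 4) (Fin 4) ℝ) =
          (-s2) • !![1,0,0,0;0,-1,0,0;0,0,0,0;0,0,0,0] + s1 • Ym D := by
        rw [aux_comb]
        subst hs3 hs4 hs5
        ext i j
        fin_cases i <;> fin_cases j <;>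
          simp [Matrix.vecHead, Matrix.vecTail] <;> ring
      rw [key]
      exact Submodule.add_mem _
        (Submodule.smul_mem _ _ (Submodule.subset_span (Set.mem_insert _ _)))
        (Submodule.smul_mem _ _ (Submodule.subset_span
          (Set.mem_insert_of_mem _ rfl)))
    · intro hL
      rw [SetLike.mem_coe, Submodule.mem_span_insert] at hL
      obtain ⟨α, z, hz, rfl⟩ := hL
      rw [Submodule.mem_span_singleton] at hz
      obtain ⟨β, rfl⟩ := hz
      rw [aux_comb]
      refine ⟨⟨?_, ?_⟩, ?_⟩
      · ext i j
        fin_cases i <;> fin_cases j <;>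
          simp [OmMat, Matrix.add_apply, Matrix.mul_apply, Matrix.transpose_apply,
            Fin.sum_univ_four, Matrix.vecHead, Matrix.vecTail] <;> ring
      · rw [Submodule.mem_span_singleton]
        refine ⟨α, ?_⟩
        ext i
        fin_cases i <;>
          simp [p1, Matrix.mulVec, dotProduct, Fin.sum_univ_four, Pi.single_apply,
            Matrix.vecHead, Matrix.vecTail]
      · refine ⟨β • (sprod p2 p2 + sprod q2 q2) + (-α) • sprod p1 q1, ?_, ?_⟩
        · exact Submodule.add_mem _
            (Submodule.smul_mem _ _ (Submodule.subset_span (Set.mem_insert _ _)))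
            (Submodule.smul_mem _ _ (Submodule.subset_span
              (Set.mem_insert_of_mem _ (Set.mem_insert _ _))))
        · rw [aux_X, aux_sprod_p1_q1, aux_Ginv D hD']
          have hs : β • (!![0,0,0,0;0,0,0,0;0,0,0,-2;0,0,2,0] : Matrix (Fin 4) (Fin 4) ℝ) +
              (-α) • !![1,0,0,0;0,-1,0,0;0,0,0,0;0,0,0,0] =
              !![-α, -2*0, 0, -0; 0, -(-α), 0, 0; 0, -0, 0, -2*β; 0, -0, 2*β, 0] := by
            have := aux_hsum β (-α) 0 0 0
            simpa using this
          rw [hs]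
          have := aux_conj D β (-α) 0 0 0
          rw [show (!![-α, -2*0, 0, -0; 0, -(-α), 0, 0; 0, -0, 0, -2*β; 0, -0, 2*β, 0] :
              Matrix (Fin 4) (Fin 4) ℝ) =
              !![-α, -2*(0:ℝ), (0:ℝ), -(0:ℝ); 0, -(-α), 0, 0; 0, -0, 0, -2*β;
                 0, -0, 2*β, 0] from rfl, this]
          ext i j
          fin_cases i <;> fin_cases j <;>
            simp [Matrix.vecHead, Matrix.vecTail] <;> ring
  · have hrange : Set.range
        ![(!![1,0,0,0;0,-1,0,0;0,0,0,0;0,0,0,0] : Matrix (Fin 4) (Fin 4) ℝ), Ym D] =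
        {!![1,0,0,0;0,-1,0,0;0,0,0,0;0,0,0,0], Ym D} := by
      ext z
      constructor
      · rintro ⟨i, rfl⟩; fin_cases i <;> simp
      · rintro (rfl | rfl)
        exacts [⟨0, rfl⟩, ⟨1, rfl⟩]
    have hli : LinearIndependent ℝ
        ![(!![1,0,0,0;0,-1,0,0;0,0,0,0;0,0,0,0] : Matrix (Fin 4) (Fin 4) ℝ), Ym D] := by
      rw [LinearIndependent.pair_iff]
      intro s t hst
      rw [aux_comb] at hst
      have e00 : s = 0 := by
        have := congrFun (congrFun hst 0) 0
        simpa [Matrix.vecHead, Matrix.vecTail] using this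
      have e23 : t * (-2*(D 0 0^2 + D 0 1^2)) = 0 := by
        have := congrFun (congrFun hst 2) 3
        simpa [Matrix.vecHead, Matrix.vecTail] using this
      have e32 : t * (2*(D 1 0^2 + D 1 1^2)) = 0 := by
        have := congrFun (congrFun hst 3) 2
        simpa [Matrix.vecHead, Matrix.vecTail] using this
      refine ⟨e00, ?_⟩
      have hsum : t * ((D 0 0^2 + D 0 1^2) + (D 1 0^2 + D 1 1^2)) = 0 := by linarith
      rcases mul_eq_zero.mp hsum with h | h
      · exact h
      · exfalso
        nlinarith [sq_nonneg (D 0 0 - D 1 1), sq_nonneg (D 0 1 + D 1 0)]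
    have := finrank_span_eq_card hli
    rw [hrange] at this
    simpa using this
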